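/- The categories Preglid FR and Prefrag FR are complete and cocomplete quasi-abelian categories: each is additive with all limits and colimits (in particular kernels and cokernels), cokernels are stable under pullback (the pullback of a morphism that is a cokernel along any morphism is again a cokernel), and kernels are stable under pushout (the pushout of a morphism that is a kernel along any morphism is again a kernel). -/

import Mathlib

set_option linter.unusedSectionVars false
set_option maxHeartbeats 1000000
set_option synthInstance.maxHeartbeats 1000000
set_option maxHeartbeats 2000000

noncomputable section

open CategoryTheory CategoryTheory.Limits

universe u

namespace GliderPaper

/-- A `Γ`-filtration `FR` on a unital ring `R`: additive subgroups `F γ` with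
`1 ∈ F 1`, monotone in `γ`, and multiplicative. -/
structure RingFiltration (Γ : Type u) [Group Γ] [PartialOrder Γ] (R : Type u) [Ring R] where
  F : Γ → AddSubgroup R
  one_mem : (1 : R) ∈ F 1
  mono : ∀ {α β : Γ}, α ≤ β → F α ≤ F β
  mul_mem : ∀ {α β : Γ} {a b : R}, a ∈ F α → b ∈ F β → a * b ∈ F (α * β)

variable {Γ : Type u} [Group Γ] [PartialOrder Γ]
  [CovariantClass Γ Γ (· * ·) (· ≤ ·)] [CovariantClass Γ Γ (Function.swap (· * ·)) (· ≤ ·)]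
  {R : Type u} [Ring R]

/-- Objects of the extended filtered companion category `oFF_Λ R`:
the disjoint union `Λ ⊔ {∞}`. -/
inductive OFF (FR : RingFiltration Γ R) (Λ : Set Γ) : Type u
  | of (α : Λ)
  | infty

/-- Objects of the filtered companion category `FF_Λ R`: the set `Λ`. -/
inductive FF (FR : RingFiltration Γ R) (Λ : Set Γ) : Type u
  | of (α : Λ)

variable (FR : RingFiltration Γ R) (Λ : Set Γ)

namespace OFF

/-- `le X Y` holds iff the canonical morphism `1_{X,Y}` is defined, i.e. `X ≤ Y` in `Λ`,
or `Y = ∞`. -/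
def le : OFF FR Λ → OFF FR Λ → Prop
  | of α, of β => (α : Γ) ≤ (β : Γ)
  | _, infty => True
  | infty, of _ => False

open scoped Classical in
/-- The additive subgroup of `R` of morphisms `X ⟶ Y` in `oFF_Λ R`:
`Hom(α,β) = F_{βα⁻¹}R` for `α ≤ β` in `Λ`, `Hom(X,∞) = R`, and `0` otherwise. -/
noncomputable def homGrp : OFF FR Λ → OFF FR Λ → AddSubgroup R
  | of α, of β => if (α : Γ) ≤ (β : Γ) then FR.F ((β : Γ) * (α : Γ)⁻¹) else ⊥
  | _, infty => ⊤
  | infty, of _ => ⊥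

theorem le_refl' : ∀ X : OFF FR Λ, le FR Λ X X
  | of _ => _root_.le_refl _
  | infty => trivial

theorem one_mem_homGrp : ∀ {X Y : OFF FR Λ}, le FR Λ X Y → (1 : R) ∈ homGrp FR Λ X Y
  | of α, of β, h => by
      have h' : (α : Γ) ≤ (β : Γ) := h
      have h1 : (1 : Γ) ≤ (β : Γ) * (α : Γ)⁻¹ := by
        rw [← mul_inv_cancel (α : Γ)]
        exact mul_le_mul_left h' _
      simpa [homGrp, if_pos h'] using FR.mono h1 FR.one_mem
  | of _, infty, _ => trivial
  | infty, infty, _ => trivial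
  | infty, of _, h => h.elim

theorem mul_mem_homGrp : ∀ {X Y Z : OFF FR Λ} {f g : R},
    f ∈ homGrp FR Λ X Y → g ∈ homGrp FR Λ Y Z → g * f ∈ homGrp FR Λ X Z := by
  intro X Y Z f g hf hg
  cases X <;> cases Y <;> cases Z <;> simp only [homGrp] at hf hg ⊢ <;> try trivial
  case of.of.of a b c =>
    by_cases hab : (a : Γ) ≤ (b : Γ)
    · by_cases hbc : (b : Γ) ≤ (c : Γ)
      · rw [if_pos hab] at hf
        rw [if_pos hbc] at hg
        rw [if_pos (le_trans hab hbc)]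
        have := FR.mul_mem hg hf
        rwa [show (c : Γ) * (b : Γ)⁻¹ * ((b : Γ) * (a : Γ)⁻¹) = (c : Γ) * (a : Γ)⁻¹ by
          group] at this
      · rw [if_neg hbc] at hg
        rw [AddSubgroup.mem_bot] at hg
        subst hg
        simp only [zero_mul]
        exact AddSubgroup.zero_mem _
    · rw [if_neg hab] at hf
      rw [AddSubgroup.mem_bot] at hf
      subst hf
      simp only [mul_zero]
      exact AddSubgroup.zero_mem _
  case of.infty.of a c =>
    rw [AddSubgroup.mem_bot] at hg
    subst hg
    simp only [zero_mul]
    exact AddSubgroup.zero_mem _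
  case infty.of.of b c =>
    rw [AddSubgroup.mem_bot] at hf
    subst hf
    simp only [mul_zero]
    exact AddSubgroup.zero_mem _
  case infty.infty.of c =>
    rw [AddSubgroup.mem_bot] at hg
    subst hg
    simp only [zero_mul]
    exact AddSubgroup.zero_mem _

instance : Category (OFF FR Λ) where
  Hom X Y := homGrp FR Λ X Y
  id X := ⟨1, one_mem_homGrp FR Λ (le_refl' FR Λ X)⟩
  comp f g := ⟨g.1 * f.1, mul_mem_homGrp FR Λ f.2 g.2⟩
  id_comp f := Subtype.ext (mul_one f.1)
  comp_id f := Subtype.ext (one_mul f.1)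
  assoc f g h := Subtype.ext (mul_assoc h.1 g.1 f.1).symm

instance : Preadditive (OFF FR Λ) where
  homGroup X Y := inferInstanceAs (AddCommGroup (homGrp FR Λ X Y))
  add_comp _ _ _ f f' g := Subtype.ext (mul_add g.1 f.1 f'.1)
  comp_add _ _ _ f g g' := Subtype.ext (add_mul g.1 g'.1 f.1)

end OFF

namespace FF

/-- The inclusion of the objects of `FF_Λ R` into those of `oFF_Λ R`. -/
def toOFF : FF FR Λ → OFF FR Λ
  | of α => .of α

instance : Category (FF FR Λ) where
  Hom X Y := OFF.homGrp FR Λ (toOFF FR Λ X) (toOFF FR Λ Y)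
  id X := ⟨1, OFF.one_mem_homGrp FR Λ (OFF.le_refl' FR Λ _)⟩
  comp f g := ⟨g.1 * f.1, OFF.mul_mem_homGrp FR Λ f.2 g.2⟩
  id_comp f := Subtype.ext (mul_one f.1)
  comp_id f := Subtype.ext (one_mul f.1)
  assoc f g h := Subtype.ext (mul_assoc h.1 g.1 f.1).symm

instance : Preadditive (FF FR Λ) where
  homGroup X Y := inferInstanceAs (AddCommGroup (OFF.homGrp FR Λ (toOFF FR Λ X) (toOFF FR Λ Y)))
  add_comp _ _ _ f f' g := Subtype.ext (mul_add g.1 f.1 f'.1)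
  comp_add _ _ _ f g g' := Subtype.ext (add_mul g.1 g'.1 f.1)

end FF

/-- The inclusion functor `j : FF_Λ R ⥤ oFF_Λ R`. -/
def jF : FF FR Λ ⥤ OFF FR Λ where
  obj := FF.toOFF FR Λ
  map f := f
  map_id _ := rfl
  map_comp _ _ := rfl

instance : (jF FR Λ).Additive := ⟨rfl⟩

/-- `Mod C`: the category of additive functors from `C` to abelian groups. -/
abbrev Mod (C : Type u) [Category.{u} C] [Preadditive C] : Type (u + 1) :=
  C ⥤+ AddCommGrpCat.{u}

/-- The component at `X` of a morphism in `Mod C`. -/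
def mapp {C : Type u} [Category.{u} C] [Preadditive C] {M N : Mod C} (f : M ⟶ N) (X : C) :
    M.obj.obj X ⟶ N.obj.obj X :=
  f.hom.app X

/-- The canonical morphism `1_{X,Y}` in `oFF_Λ R`, given by `1_R`. -/
def unitHom (X Y : OFF FR Λ) (h : OFF.le FR Λ X Y) : X ⟶ Y :=
  ⟨1, OFF.one_mem_homGrp FR Λ h⟩

/-- The canonical morphism `1_{α,β}` in `FF_Λ R`, given by `1_R`. -/
def unitHomFF (α β : Λ) (h : (α : Γ) ≤ (β : Γ)) : (FF.of α : FF FR Λ) ⟶ FF.of β :=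
  unitHom FR Λ (.of α) (.of β) h

/-- A module `M` over `oFF_Λ R` is a preglider if all the maps `M(1_{X,Y})` are injective. -/
def IsPreglider (M : Mod (OFF FR Λ)) : Prop :=
  ∀ (X Y : OFF FR Λ) (h : OFF.le FR Λ X Y), Function.Injective (M.obj.map (unitHom FR Λ X Y h))

/-- A module `M` over `FF_Λ R` is a prefragment if all the maps `M(1_{α,β})` are injective. -/
def IsPrefragment (M : Mod (FF FR Λ)) : Prop :=
  ∀ (α β : Λ) (h : (α : Γ) ≤ (β : Γ)), Function.Injective (M.obj.map (unitHomFF FR Λ α β h))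

/-- The category of pregliders: the full subcategory of `Mod (oFF_Λ R)` of pregliders. -/
abbrev Preglid : Type (u + 1) :=
  ObjectProperty.FullSubcategory (fun M : Mod (OFF FR Λ) => IsPreglider FR Λ M)

instance : Preadditive (Preglid FR Λ) := Preadditive.inducedCategory _

/-- The category of prefragments: the full subcategory of `Mod (FF_Λ R)` of prefragments. -/
abbrev Prefrag : Type (u + 1) :=
  ObjectProperty.FullSubcategory (fun M : Mod (FF FR Λ) => IsPrefragment FR Λ M)

instance : Preadditive (Prefrag FR Λ) := Preadditive.inducedCategory _

/-- The inclusion `Preglid FR Λ ⥤ Mod (oFF_Λ R)`. -/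
def iotaF : Preglid FR Λ ⥤ Mod (OFF FR Λ) := ObjectProperty.ι _

/-- The inclusion `Prefrag FR Λ ⥤ Mod (FF_Λ R)`. -/
def etaF : Prefrag FR Λ ⥤ Mod (FF FR Λ) := ObjectProperty.ι _

/-- The component at `X` of a morphism of pregliders. -/
def pgapp {M N : Preglid FR Λ} (f : M ⟶ N) (X : OFF FR Λ) :
    M.obj.obj.obj X ⟶ N.obj.obj.obj X :=
  mapp f.hom X

/-- The component at `X` of a morphism of prefragments. -/
def pfapp {M N : Prefrag FR Λ} (f : M ⟶ N) (X : FF FR Λ) :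
    M.obj.obj.obj X ⟶ N.obj.obj.obj X :=
  mapp f.hom X

/-- The class `Σ` of morphisms of pregliders all of whose components at objects of `Λ`
are isomorphisms. -/
def SigmaClass : MorphismProperty (Preglid FR Λ) :=
  fun _ _ f => ∀ α : Λ, IsIso (pgapp FR Λ f (.of α))

/-- The category of glider representations: the localization of `Preglid FR Λ` at `Σ`. -/
abbrev Glid : Type (u + 1) := (SigmaClass FR Λ).Localization

/-- The localization functor `Q : Preglid FR Λ ⥤ Glid FR Λ`. -/
def QF : Preglid FR Λ ⥤ Glid FR Λ := (SigmaClass FR Λ).Q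

/-- The restriction functor `j^* : Mod (oFF_Λ R) ⥤ Mod (FF_Λ R)`. -/
def jStar : Mod (OFF FR Λ) ⥤ Mod (FF FR Λ) where
  obj M := ⟨jF FR Λ ⋙ M.obj, by haveI := M.property; exact (inferInstance : (jF FR Λ ⋙ M.obj).Additive)⟩
  map {M N} f := InducedCategory.homMk (Functor.whiskerLeft (jF FR Λ) f.hom)
  map_id _ := rfl
  map_comp _ _ := rfl

theorem isPrefragment_jStar (M : Mod (OFF FR Λ)) (hM : IsPreglider FR Λ M) :
    IsPrefragment FR Λ ((jStar FR Λ).obj M) :=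
  fun α β h => hM (.of α) (.of β) h

/-- The restriction functor `j^* : Preglid FR Λ ⥤ Prefrag FR Λ`. -/
def jRes : Preglid FR Λ ⥤ Prefrag FR Λ where
  obj M := ⟨(jStar FR Λ).obj M.obj, isPrefragment_jStar FR Λ M.obj M.property⟩
  map f := InducedCategory.homMk ((jStar FR Λ).map f.hom)
  map_id M := by ext1; exact (jStar FR Λ).map_id M.obj
  map_comp f g := by ext1; exact (jStar FR Λ).map_comp f.hom g.hom

theorem sigma_isInvertedBy : (SigmaClass FR Λ).IsInvertedBy (jRes FR Λ) := by
  intro M N f hf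
  haveI : (AdditiveFunctor.forget (FF FR Λ) AddCommGrpCat.{u}).Faithful :=
    ObjectProperty.faithful_ι _
  haveI : ∀ X : FF FR Λ, IsIso
      (((ObjectProperty.ι (fun M : Mod (FF FR Λ) => IsPrefragment FR Λ M) ⋙
        AdditiveFunctor.forget _ _).map ((jRes FR Λ).map f)).app X) := by
    rintro ⟨α⟩
    exact hf α
  haveI : IsIso ((ObjectProperty.ι (fun M : Mod (FF FR Λ) => IsPrefragment FR Λ M) ⋙
      AdditiveFunctor.forget _ _).map ((jRes FR Λ).map f)) :=
    NatIso.isIso_of_isIso_app _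
  exact isIso_of_reflects_iso ((jRes FR Λ).map f)
    (ObjectProperty.ι (fun M : Mod (FF FR Λ) => IsPrefragment FR Λ M) ⋙
      AdditiveFunctor.forget _ _)

/-- The canonical fully faithful functor `φ : Glid FR Λ ⥤ Prefrag FR Λ`,
the unique functor with `Q ⋙ φ = j^*`. -/
def phiF : Glid FR Λ ⥤ Prefrag FR Λ :=
  Localization.Construction.lift (jRes FR Λ) (sigma_isInvertedBy FR Λ)

theorem phiF_fac : QF FR Λ ⋙ phiF FR Λ = jRes FR Λ :=
  Localization.Construction.fac _ _


section ConflationDefs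

/-- `f` factors through a zero object. In an additive category this says `f = 0`;
we use it to express (co)kernels without assuming a preadditive structure. -/
def FactorsThroughZero {C : Type*} [Category C] {X Y : C} (f : X ⟶ Y) : Prop :=
  ∃ (N : C) (_ : IsZero N) (a : X ⟶ N) (b : N ⟶ Y), f = a ≫ b

/-- `g` is a cokernel of `f` (universal property). -/
def IsCokernelOf {C : Type*} [Category C] {X Y Z : C} (f : X ⟶ Y) (g : Y ⟶ Z) : Prop :=
  FactorsThroughZero (f ≫ g) ∧
  ∀ ⦃W : C⦄ (h : Y ⟶ W), FactorsThroughZero (f ≫ h) → ∃! k : Z ⟶ W, g ≫ k = h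

/-- `f` is a kernel of `g` (universal property). -/
def IsKernelOf {C : Type*} [Category C] {X Y Z : C} (g : Y ⟶ Z) (f : X ⟶ Y) : Prop :=
  FactorsThroughZero (f ≫ g) ∧
  ∀ ⦃W : C⦄ (h : W ⟶ Y), FactorsThroughZero (h ≫ g) → ∃! k : W ⟶ X, k ≫ f = h

/-- `g` is a cokernel (of some morphism). -/
def IsCokernelMor {C : Type*} [Category C] {Y Z : C} (g : Y ⟶ Z) : Prop :=
  ∃ (X : C) (f : X ⟶ Y), IsCokernelOf f g

/-- `f` is a kernel (of some morphism). -/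
def IsKernelMor {C : Type*} [Category C] {X Y : C} (f : X ⟶ Y) : Prop :=
  ∃ (Z : C) (g : Y ⟶ Z), IsKernelOf g f

end ConflationDefs

section General
variable {C : Type u} [Category.{u} C] [Preadditive C]
variable (P : (C ⥤+ AddCommGrpCat.{u}) → Prop)
variable (rel : C → C → Prop) (uh : ∀ ⦃X Y : C⦄, rel X Y → (X ⟶ Y))

/-- characterization predicate on plain functors -/
def Good (F : C ⥤ AddCommGrpCat.{u}) : Prop :=
  ∀ ⦃X Y : C⦄ (h : rel X Y), Function.Injective (F.map (uh h))

/-- underlying plain functor of an object of the full subcategory -/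
abbrev val (M : ObjectProperty.FullSubcategory P) : C ⥤ AddCommGrpCat.{u} := M.obj.obj

abbrev pack (hP : ∀ M : C ⥤+ AddCommGrpCat.{u}, P M ↔ Good rel uh M.obj)
    (F : C ⥤ AddCommGrpCat.{u}) (hA : F.Additive) (hG : Good rel uh F) :
    ObjectProperty.FullSubcategory P :=
  ⟨⟨F, hA⟩, (hP ⟨F, hA⟩).mpr hG⟩

lemma good_val (hP : ∀ M : C ⥤+ AddCommGrpCat.{u}, P M ↔ Good rel uh M.obj) (M : ObjectProperty.FullSubcategory P) : Good rel uh (val P M) := (hP _).mp M.property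

abbrev ap {M N : ObjectProperty.FullSubcategory P} (σ : M ⟶ N) : val P M ⟶ val P N := σ.hom.hom

@[simp] lemma ap_comp {M N K : ObjectProperty.FullSubcategory P} (σ : M ⟶ N) (τ : N ⟶ K) :
    ap P (σ ≫ τ) = ap P σ ≫ ap P τ := rfl

@[simp] lemma ap_id (M : ObjectProperty.FullSubcategory P) : ap P (𝟙 M) = 𝟙 (val P M) := rfl

lemma fhom_ext {M N : ObjectProperty.FullSubcategory P} {σ τ : M ⟶ N} (h : ap P σ = ap P τ) : σ = τ :=
  ObjectProperty.hom_ext _ (ObjectProperty.hom_ext _ h)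

/-- morphism from underlying nat trans -/
abbrev homOf {M N : ObjectProperty.FullSubcategory P} (σ : val P M ⟶ val P N) : M ⟶ N :=
  ObjectProperty.homMk (ObjectProperty.homMk σ)




section ZeroObj

/-- the zero group -/
def zGrp : AddCommGrpCat.{u} := AddCommGrpCat.of PUnit

instance zGrp_sub : Subsingleton (zGrp : Type u) := inferInstanceAs (Subsingleton PUnit)

instance zGrp_hom_sub (A : AddCommGrpCat.{u}) : Subsingleton (A ⟶ zGrp) :=
  ⟨fun f g => by ext x; exact Subsingleton.elim _ _⟩

instance zGrp_hom_sub' (A : AddCommGrpCat.{u}) : Subsingleton (zGrp ⟶ A) :=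
  ⟨fun f g => by
    ext x
    have hx : x = 0 := Subsingleton.elim _ _
    rw [hx, f.hom.map_zero, g.hom.map_zero]⟩

/-- the constant-zero functor -/
def zeroF : C ⥤ AddCommGrpCat.{u} where
  obj _ := zGrp
  map _ := 0
  map_id _ := Subsingleton.elim _ _
  map_comp _ _ := Subsingleton.elim _ _

instance zeroF_obj_sub (X : C) : Subsingleton ((zeroF (C := C)).obj X : Type u) := zGrp_sub

instance zeroF_hom_sub (A : AddCommGrpCat.{u}) (X : C) :
    Subsingleton (A ⟶ (zeroF (C := C)).obj X) := zGrp_hom_sub A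

instance zeroF_hom_sub2 (X Y : C) :
    Subsingleton ((zeroF (C := C)).obj X ⟶ (zeroF (C := C)).obj Y) := zGrp_hom_sub _

instance zeroF_additive : (zeroF (C := C)).Additive where
  map_add := Subsingleton.elim _ _

lemma zeroF_good : Good rel uh (zeroF (C := C)) :=
  fun _ _ _ a b _ => Subsingleton.elim a b

/-- the zero object of the full subcategory -/
abbrev zeroObj (hP : ∀ M : C ⥤+ AddCommGrpCat.{u}, P M ↔ Good rel uh M.obj) :
    ObjectProperty.FullSubcategory P :=
  pack P rel uh hP zeroF inferInstance (zeroF_good rel uh)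

lemma isZero_zeroObj (hP : ∀ M : C ⥤+ AddCommGrpCat.{u}, P M ↔ Good rel uh M.obj) :
    IsZero (zeroObj P rel uh hP) := by
  constructor
  · intro N
    refine ⟨⟨⟨show zeroObj P rel uh hP ⟶ N from homOf P (0 : zeroF ⟶ val P N)⟩,
      fun σ => fhom_ext P ?_⟩⟩
    ext X x
    have hx : x = (0 : (zeroF (C := C)).obj X) := Subsingleton.elim _ _
    rw [hx]
    have h1 : ((ap P σ).app X) 0 = 0 := ((ap P σ).app X).hom.map_zero
    rw [h1]
    exact (((0 : zeroF ⟶ val P N).app X).hom.map_zero).symm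
  · intro N
    refine ⟨⟨⟨show N ⟶ zeroObj P rel uh hP from homOf P (0 : val P N ⟶ zeroF)⟩,
      fun σ => fhom_ext P ?_⟩⟩
    ext X x
    exact Subsingleton.elim _ _

lemma isZero_pointwise {N : ObjectProperty.FullSubcategory P} (hN : IsZero N) (X : C)
    (n : (val P N).obj X) : n = 0 := by
  have h : (𝟙 N : N ⟶ N) = (show N ⟶ N from homOf P (0 : val P N ⟶ val P N)) := hN.eq_of_src _ _
  have := congrArg (fun σ : N ⟶ N => ((ap P σ).app X) n) h
  exact this.trans rfl

lemma factorsThroughZero_iff (hP : ∀ M : C ⥤+ AddCommGrpCat.{u}, P M ↔ Good rel uh M.obj)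
    {M N : ObjectProperty.FullSubcategory P} (σ : M ⟶ N) :
    FactorsThroughZero σ ↔ ∀ (X : C) (m : (val P M).obj X), (ap P σ).app X m = 0 := by
  constructor
  · rintro ⟨Z, hZ, a, b, rfl⟩ X m
    have h0 : (ap P a).app X m = 0 := isZero_pointwise P hZ X _
    have h1 : (ap P (a ≫ b)).app X m = (ap P b).app X ((ap P a).app X m) := rfl
    rw [h1, h0]
    exact ((ap P b).app X).hom.map_zero
  · intro h
    refine ⟨zeroObj P rel uh hP, isZero_zeroObj P rel uh hP,
      show M ⟶ zeroObj P rel uh hP from homOf P (0 : val P M ⟶ zeroF),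
      show zeroObj P rel uh hP ⟶ N from homOf P (0 : zeroF ⟶ val P N), fhom_ext P ?_⟩
    ext X m
    rw [h X m]
    have h1 : (ap P ((show M ⟶ zeroObj P rel uh hP from homOf P (0 : val P M ⟶ zeroF)) ≫
        (show zeroObj P rel uh hP ⟶ N from homOf P (0 : zeroF ⟶ val P N)))).app X m
        = ((0 : zeroF ⟶ val P N).app X) (((0 : val P M ⟶ zeroF)).app X m) := rfl
    rw [h1]
    have h2 : ((0 : val P M ⟶ zeroF)).app X m = 0 := Subsingleton.elim _ _
    rw [h2]
    exact (((0 : zeroF ⟶ val P N).app X).hom.map_zero).symm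

end ZeroObj

section Reflection

lemma nat_apply {F G : C ⥤ AddCommGrpCat.{u}} (φ : F ⟶ G) {X Y : C} (f : X ⟶ Y) (m : F.obj X) :
    φ.app Y (F.map f m) = G.map f (φ.app X m) :=
  congrArg (fun g : F.obj X ⟶ G.obj Y => g m) (φ.naturality f)

variable (M : C ⥤ AddCommGrpCat.{u})

/-- elements killed by every map into a good module -/
def tker (X : C) : AddSubgroup (M.obj X) where
  carrier := {m | ∀ (N : C ⥤+ AddCommGrpCat.{u}), P N → ∀ φ : M ⟶ N.obj, φ.app X m = 0}
  zero_mem' := fun N hN φ => (φ.app X).hom.map_zero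
  add_mem' := fun {a b} ha hb N hN φ => by
    rw [(φ.app X).hom.map_add, ha N hN φ, hb N hN φ, add_zero]
  neg_mem' := fun {a} ha N hN φ => by rw [(φ.app X).hom.map_neg, ha N hN φ, neg_zero]

lemma tker_comp {X Y : C} (f : X ⟶ Y) {m : M.obj X} (hm : m ∈ tker P M X) :
    M.map f m ∈ tker P M Y := fun N hN φ => by
  rw [nat_apply φ f m, hm N hN φ, (N.obj.map f).hom.map_zero]

/-- the reflection: quotient by `tker` -/
def reflF : C ⥤ AddCommGrpCat.{u} where
  obj X := AddCommGrpCat.of (M.obj X ⧸ tker P M X)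
  map {X Y} f := AddCommGrpCat.ofHom
    (QuotientAddGroup.map _ _ (M.map f).hom (fun m hm => tker_comp P M f hm))
  map_id X := by
    refine AddCommGrpCat.ext fun x => ?_
    induction x using QuotientAddGroup.induction_on with
    | H m => show QuotientAddGroup.mk (M.map (𝟙 X) m) = _
             rw [M.map_id]
             rfl
  map_comp {X Y Z} f g := by
    refine AddCommGrpCat.ext fun x => ?_
    induction x using QuotientAddGroup.induction_on with
    | H m => show QuotientAddGroup.mk (M.map (f ≫ g) m) = _
             rw [M.map_comp]
             rfl

lemma reflF_map_mk {X Y : C} (f : X ⟶ Y) (m : M.obj X) :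
    (reflF P M).map f (QuotientAddGroup.mk m) = QuotientAddGroup.mk (M.map f m) := rfl

lemma reflF_additive : (reflF P M).Additive where
  map_add {X Y f g} := by
    ext x
    induction x using QuotientAddGroup.induction_on with
    | H m =>
      have hr : ((reflF P M).map f + (reflF P M).map g) (QuotientAddGroup.mk m)
          = (QuotientAddGroup.mk (M.map f m + M.map g m) : M.obj Y ⧸ tker P M Y) := rfl
      rw [hr, reflF_map_mk]
      refine (QuotientAddGroup.eq_iff_sub_mem).mpr ?_
      intro N hN φ
      have h1 : φ.app Y (M.map (f + g) m) = N.obj.map (f + g) (φ.app X m) := nat_apply φ _ m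
      have h2 : φ.app Y (M.map f m) = N.obj.map f (φ.app X m) := nat_apply φ _ m
      have h3 : φ.app Y (M.map g m) = N.obj.map g (φ.app X m) := nat_apply φ _ m
      rw [(φ.app Y).hom.map_sub, (φ.app Y).hom.map_add, h1, h2, h3, N.property.map_add,
        AddCommGrpCat.hom_add_apply]
      abel

lemma reflF_good (hP : ∀ M : C ⥤+ AddCommGrpCat.{u}, P M ↔ Good rel uh M.obj) :
    Good rel uh (reflF P M) := by
  intro X Y h
  rw [injective_iff_map_eq_zero]
  intro x
  induction x using QuotientAddGroup.induction_on with
  | H m =>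
    intro hm
    rw [reflF_map_mk] at hm
    have hm' : M.map (uh h) m ∈ tker P M Y := (QuotientAddGroup.eq_zero_iff _).mp hm
    apply (QuotientAddGroup.eq_zero_iff _).mpr
    intro N hN φ
    have := hm' N hN φ
    rw [nat_apply φ (uh h) m] at this
    exact (hP N).mp hN h ((by rw [this, (N.obj.map (uh h)).hom.map_zero] :
      N.obj.map (uh h) (φ.app X m) = N.obj.map (uh h) 0))

/-- the unit of the reflection -/
def reflUnit : M ⟶ reflF P M where
  app X := AddCommGrpCat.ofHom (QuotientAddGroup.mk' _)
  naturality X Y f := rfl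

lemma reflUnit_surjective (X : C) : Function.Surjective ((reflUnit P M).app X) :=
  fun x => QuotientAddGroup.induction_on x fun m => ⟨m, rfl⟩

/-- factor a map to a good module through the reflection -/
def reflDesc (N : C ⥤+ AddCommGrpCat.{u}) (hN : P N) (φ : M ⟶ N.obj) : reflF P M ⟶ N.obj where
  app X := AddCommGrpCat.ofHom
    (QuotientAddGroup.lift _ (φ.app X).hom (fun m hm => hm N hN φ))
  naturality X Y f := by
    ext x
    induction x using QuotientAddGroup.induction_on with
    | H m =>
      show φ.app Y (M.map f m) = N.obj.map f (φ.app X m)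
      exact nat_apply φ f m

lemma reflUnit_desc (N : C ⥤+ AddCommGrpCat.{u}) (hN : P N) (φ : M ⟶ N.obj) :
    reflUnit P M ≫ reflDesc P M N hN φ = φ := rfl

lemma refl_hom_ext {G : C ⥤ AddCommGrpCat.{u}} (ψ ψ' : reflF P M ⟶ G)
    (h : reflUnit P M ≫ ψ = reflUnit P M ≫ ψ') : ψ = ψ' := by
  ext X x
  induction x using QuotientAddGroup.induction_on with
  | H m => exact congrArg (fun χ : M ⟶ G => χ.app X m) h

/-- the inclusion functor into plain functors -/
def inclF : ObjectProperty.FullSubcategory P ⥤ (C ⥤ AddCommGrpCat.{u}) :=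
  ObjectProperty.ι P ⋙ AdditiveFunctor.forget C AddCommGrpCat.{u}

instance : (AdditiveFunctor.forget C AddCommGrpCat.{u}).Faithful := ObjectProperty.faithful_ι _
instance : (AdditiveFunctor.forget C AddCommGrpCat.{u}).Full := ObjectProperty.full_ι _
instance : (inclF P).Faithful := Functor.Faithful.comp _ _
instance : (inclF P).Full := Functor.Full.comp _ _

variable (hP : ∀ M : C ⥤+ AddCommGrpCat.{u}, P M ↔ Good rel uh M.obj)

/-- reflection as an object of the subcategory -/
def reflObj (M : C ⥤ AddCommGrpCat.{u}) : ObjectProperty.FullSubcategory P :=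
  pack P rel uh hP (reflF P M) (reflF_additive P M) (reflF_good P rel uh M hP)

def reflEquiv (M : C ⥤ AddCommGrpCat.{u}) (N : ObjectProperty.FullSubcategory P) :
    (reflObj P rel uh hP M ⟶ N) ≃ (M ⟶ (inclF P).obj N) where
  toFun ψ := reflUnit P M ≫ ap P ψ
  invFun φ := homOf P <| show reflF P M ⟶ val P N from reflDesc P M N.obj N.property φ
  left_inv ψ := fhom_ext P (refl_hom_ext P M _ _ (reflUnit_desc P M N.obj N.property _))
  right_inv φ := rfl

def frgReflective : Reflective (inclF P) where
  L := Adjunction.leftAdjointOfEquiv (fun M N => reflEquiv P rel uh hP M N)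
    (fun M N N' g h => by
      show reflUnit P M ≫ _ = (reflUnit P M ≫ _) ≫ _
      exact (Category.assoc _ _ _).symm)
  adj := Adjunction.adjunctionOfEquivLeft _ _

theorem frg_hasLimits (rel : C → C → Prop) (uh : ∀ ⦃X Y : C⦄, rel X Y → (X ⟶ Y))
    (hP : ∀ M : C ⥤+ AddCommGrpCat.{u}, P M ↔ Good rel uh M.obj) :
    HasLimits (ObjectProperty.FullSubcategory P) := by
  haveI := frgReflective P rel uh hP
  exact hasLimits_of_reflective (inclF P)

theorem frg_hasColimits (rel : C → C → Prop) (uh : ∀ ⦃X Y : C⦄, rel X Y → (X ⟶ Y))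
    (hP : ∀ M : C ⥤+ AddCommGrpCat.{u}, P M ↔ Good rel uh M.obj) :
    HasColimits (ObjectProperty.FullSubcategory P) := by
  haveI := frgReflective P rel uh hP
  exact hasColimits_of_reflective (inclF P)

end Reflection

section AbUtil

lemma fiber_eq {A B W : AddCommGrpCat.{u}} (g : A ⟶ B) (h : A ⟶ W)
    (hk : ∀ a, g a = 0 → h a = 0) {u v : A} (huv : g u = g v) : h u = h v := by
  have h0 : h (u - v) = 0 := hk _ (by rw [g.hom.map_sub, huv, sub_self])
  rw [h.hom.map_sub] at h0
  exact sub_eq_zero.mp h0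

/-- descend along a surjection -/
def surjDesc {A B W : AddCommGrpCat.{u}} (g : A ⟶ B) (h : A ⟶ W) (hs : Function.Surjective g)
    (hk : ∀ a, g a = 0 → h a = 0) : B ⟶ W :=
  AddCommGrpCat.ofHom (AddMonoidHom.mk' (fun b => h (hs b).choose) (fun b b' => by
    show h (hs (b + b')).choose = h (hs b).choose + h (hs b').choose
    have h1 : g (hs (b + b')).choose = g ((hs b).choose + (hs b').choose) := by
      rw [g.hom.map_add, (hs b).choose_spec, (hs b').choose_spec, (hs (b + b')).choose_spec]
    rw [fiber_eq g h hk h1, h.hom.map_add]))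

lemma surjDesc_apply {A B W : AddCommGrpCat.{u}} (g : A ⟶ B) (h : A ⟶ W)
    (hs : Function.Surjective g) (hk : ∀ a, g a = 0 → h a = 0) (a : A) :
    surjDesc g h hs hk (g a) = h a :=
  fiber_eq g h hk ((hs (g a)).choose_spec)

/-- lift along an injection -/
def injDesc {B A W : AddCommGrpCat.{u}} (i : B ⟶ A) (hi : Function.Injective i) (h : W ⟶ A)
    (hr : ∀ w, ∃ b, i b = h w) : W ⟶ B :=
  AddCommGrpCat.ofHom (AddMonoidHom.mk' (fun w => (hr w).choose) (fun w w' => by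
    show (hr (w + w')).choose = (hr w).choose + (hr w').choose
    apply hi
    rw [i.hom.map_add, (hr w).choose_spec, (hr w').choose_spec, (hr (w + w')).choose_spec,
      h.hom.map_add]))

lemma injDesc_spec {B A W : AddCommGrpCat.{u}} (i : B ⟶ A) (hi : Function.Injective i)
    (h : W ⟶ A) (hr : ∀ w, ∃ b, i b = h w) (w : W) :
    i (injDesc i hi h hr w) = h w :=
  (hr w).choose_spec

/-- map between subgroup objects -/
def sgHom {A B : AddCommGrpCat.{u}} (f : A ⟶ B) (S : AddSubgroup (A : Type u))
    (T : AddSubgroup (B : Type u)) (h : ∀ a ∈ S, f a ∈ T) :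
    AddCommGrpCat.of S ⟶ AddCommGrpCat.of T :=
  AddCommGrpCat.ofHom ((AddMonoidHom.comp f.hom S.subtype).codRestrict T (fun a => h a a.2))

@[simp] lemma sgHom_apply {A B : AddCommGrpCat.{u}} (f : A ⟶ B) (S : AddSubgroup (A : Type u))
    (T : AddSubgroup (B : Type u)) (h : ∀ a ∈ S, f a ∈ T) (a : AddCommGrpCat.of S) :
    (sgHom f S T h a).1 = f a.1 := rfl

end AbUtil

section PointwiseLemmas

lemma ap_apply_comp {M N K : ObjectProperty.FullSubcategory P} (σ : M ⟶ N) (τ : N ⟶ K) (X : C)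
    (m : (val P M).obj X) :
    (ap P (σ ≫ τ)).app X m = (ap P τ).app X ((ap P σ).app X m) := rfl

lemma ap_apply_id {M : ObjectProperty.FullSubcategory P} (X : C) (m : (val P M).obj X) :
    (ap P (𝟙 M)).app X m = m := rfl

lemma iso_bijective {M N : ObjectProperty.FullSubcategory P} (e : M ≅ N) (X : C) :
    Function.Bijective ((ap P e.hom).app X) := by
  constructor
  · intro a b hab
    have := congrArg ((ap P e.inv).app X) hab
    rw [← ap_apply_comp, ← ap_apply_comp, e.hom_inv_id] at this
    simpa [ap_apply_id] using this
  · intro n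
    refine ⟨(ap P e.inv).app X n, ?_⟩
    rw [← ap_apply_comp, e.inv_hom_id, ap_apply_id]

end PointwiseLemmas

section SubQuot

variable {M : ObjectProperty.FullSubcategory P}

section Sub
variable (S : ∀ X : C, AddSubgroup ((val P M).obj X))
  (hS : ∀ ⦃X Y : C⦄ (f : X ⟶ Y) (m : (val P M).obj X), m ∈ S X → (val P M).map f m ∈ S Y)

/-- subfunctor -/
def subF : C ⥤ AddCommGrpCat.{u} where
  obj X := AddCommGrpCat.of (S X)
  map f := sgHom ((val P M).map f) _ _ (fun a ha => hS f a ha)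
  map_id X := by
    ext a
    show (val P M).map (𝟙 X) a.1 = a.1
    rw [CategoryTheory.Functor.map_id]
    rfl
  map_comp f g := by
    ext a
    show (val P M).map (f ≫ g) a.1 = (val P M).map g ((val P M).map f a.1)
    rw [CategoryTheory.Functor.map_comp]
    rfl

lemma subF_additive : (subF P S hS).Additive where
  map_add {X Y f g} := by
    ext a
    refine Subtype.ext ?_
    show (val P M).map (f + g) a.1 = (((subF P S hS).map f + (subF P S hS).map g) a).1
    rw [M.obj.property.map_add, AddCommGrpCat.hom_add_apply]
    rfl

lemma subF_good (hP : ∀ M : C ⥤+ AddCommGrpCat.{u}, P M ↔ Good rel uh M.obj) :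
    Good rel uh (subF P S hS) := by
  intro X Y h a b hab
  exact Subtype.ext (good_val P rel uh hP M h (congrArg Subtype.val hab))

variable (hP : ∀ M : C ⥤+ AddCommGrpCat.{u}, P M ↔ Good rel uh M.obj)

def subObj : ObjectProperty.FullSubcategory P :=
  pack P rel uh hP (subF P S hS) (subF_additive P S hS) (subF_good P rel uh S hS hP)

def subIncl : subObj P rel uh S hS hP ⟶ M :=
  homOf P <| show subF P S hS ⟶ val P M from
    { app := fun X => AddCommGrpCat.ofHom ((S X).subtype)
      naturality := fun X Y f => rfl }

lemma subIncl_apply (X : C) (a : (subF P S hS).obj X) :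
    (ap P (subIncl P rel uh S hS hP)).app X a = a.1 := rfl

lemma subIncl_injective (X : C) :
    Function.Injective ((ap P (subIncl P rel uh S hS hP)).app X) :=
  fun _ _ h => Subtype.ext h

lemma subIncl_range (X : C) (m : (val P M).obj X) :
    (∃ a, (ap P (subIncl P rel uh S hS hP)).app X a = m) ↔ m ∈ S X := by
  constructor
  · rintro ⟨a, rfl⟩; exact a.2
  · intro hm; exact ⟨⟨m, hm⟩, rfl⟩

end Sub

section Quot
variable (K : ∀ X : C, AddSubgroup ((val P M).obj X))
  (hK : ∀ ⦃X Y : C⦄ (f : X ⟶ Y) (m : (val P M).obj X), m ∈ K X → (val P M).map f m ∈ K Y)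

/-- quotient functor -/
def quotF : C ⥤ AddCommGrpCat.{u} where
  obj X := AddCommGrpCat.of ((val P M).obj X ⧸ K X)
  map {X Y} f := AddCommGrpCat.ofHom
    (QuotientAddGroup.map _ _ ((val P M).map f).hom (fun m hm => hK f m hm))
  map_id X := by
    refine AddCommGrpCat.ext fun x => ?_
    induction x using QuotientAddGroup.induction_on with
    | H m => show QuotientAddGroup.mk ((val P M).map (𝟙 X) m) = _
             rw [CategoryTheory.Functor.map_id]
             rfl
  map_comp {X Y Z} f g := by
    refine AddCommGrpCat.ext fun x => ?_
    induction x using QuotientAddGroup.induction_on with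
    | H m => show QuotientAddGroup.mk ((val P M).map (f ≫ g) m) = _
             rw [CategoryTheory.Functor.map_comp]
             rfl

lemma quotF_map_mk {X Y : C} (f : X ⟶ Y) (m : (val P M).obj X) :
    (quotF P K hK).map f (QuotientAddGroup.mk m) = QuotientAddGroup.mk ((val P M).map f m) :=
  rfl

lemma quotF_additive : (quotF P K hK).Additive where
  map_add {X Y f g} := by
    ext x
    induction x using QuotientAddGroup.induction_on with
    | H m =>
      have hr : ((quotF P K hK).map f + (quotF P K hK).map g) (QuotientAddGroup.mk m)
          = (QuotientAddGroup.mk ((val P M).map f m + (val P M).map g m) :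
              (val P M).obj Y ⧸ K Y) := rfl
      rw [hr, quotF_map_mk, M.obj.property.map_add, AddCommGrpCat.hom_add_apply]

lemma quotF_good
    (hcl : ∀ ⦃X Y : C⦄ (h : rel X Y) (m : (val P M).obj X),
      (val P M).map (uh h) m ∈ K Y → m ∈ K X) :
    Good rel uh (quotF P K hK) := by
  intro X Y h
  rw [injective_iff_map_eq_zero]
  intro x
  induction x using QuotientAddGroup.induction_on with
  | H m =>
    intro hm
    rw [quotF_map_mk] at hm
    exact (QuotientAddGroup.eq_zero_iff _).mpr
      (hcl h m ((QuotientAddGroup.eq_zero_iff _).mp hm))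

variable (hP : ∀ M : C ⥤+ AddCommGrpCat.{u}, P M ↔ Good rel uh M.obj)
variable (hcl : ∀ ⦃X Y : C⦄ (h : rel X Y) (m : (val P M).obj X),
      (val P M).map (uh h) m ∈ K Y → m ∈ K X)

def quotObj : ObjectProperty.FullSubcategory P :=
  pack P rel uh hP (quotF P K hK) (quotF_additive P K hK) (quotF_good P rel uh K hK hcl)

def quotπ : M ⟶ quotObj P rel uh K hK hP hcl :=
  homOf P <| show val P M ⟶ quotF P K hK from
    { app := fun X => AddCommGrpCat.ofHom (QuotientAddGroup.mk' (K X))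
      naturality := fun X Y f => rfl }

lemma quotπ_apply (X : C) (m : (val P M).obj X) :
    (ap P (quotπ P rel uh K hK hP hcl)).app X m = QuotientAddGroup.mk m := rfl

lemma quotπ_surjective (X : C) :
    Function.Surjective ((ap P (quotπ P rel uh K hK hP hcl)).app X) :=
  fun x => QuotientAddGroup.induction_on x fun m => ⟨m, rfl⟩

lemma quotπ_eq_zero_iff (X : C) (m : (val P M).obj X) :
    (ap P (quotπ P rel uh K hK hP hcl)).app X m = 0 ↔ m ∈ K X := by
  rw [quotπ_apply]
  exact QuotientAddGroup.eq_zero_iff m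

def quotDesc {W : ObjectProperty.FullSubcategory P} (τ : M ⟶ W)
    (hτ : ∀ (X : C) (m : (val P M).obj X), m ∈ K X → (ap P τ).app X m = 0) :
    quotObj P rel uh K hK hP hcl ⟶ W :=
  homOf P <| show quotF P K hK ⟶ val P W from
    { app := fun X => AddCommGrpCat.ofHom (QuotientAddGroup.lift (K X) ((ap P τ).app X).hom (hτ X))
      naturality := fun X Y e => by
        ext x
        induction x using QuotientAddGroup.induction_on with
        | H m => exact nat_apply (ap P τ) e m }

lemma quotπ_quotDesc {W : ObjectProperty.FullSubcategory P} (τ : M ⟶ W)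
    (hτ : ∀ (X : C) (m : (val P M).obj X), m ∈ K X → (ap P τ).app X m = 0) :
    quotπ P rel uh K hK hP hcl ≫ quotDesc P rel uh K hK hP hcl τ hτ = τ := rfl

lemma quot_hom_ext {W : ObjectProperty.FullSubcategory P} (σ σ' : quotObj P rel uh K hK hP hcl ⟶ W)
    (h : quotπ P rel uh K hK hP hcl ≫ σ = quotπ P rel uh K hK hP hcl ≫ σ') : σ = σ' := by
  apply fhom_ext
  ext X x
  induction x using QuotientAddGroup.induction_on with
  | H m => exact congrArg (fun χ : M ⟶ W => (ap P χ).app X m) h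

end Quot

end SubQuot

section Coker

variable (hP : ∀ M : C ⥤+ AddCommGrpCat.{u}, P M ↔ Good rel uh M.obj)

theorem isCokernelMor_of_surjective (hP : ∀ M : C ⥤+ AddCommGrpCat.{u}, P M ↔ Good rel uh M.obj)
    {M N : ObjectProperty.FullSubcategory P} (g : M ⟶ N)
    (hs : ∀ X : C, Function.Surjective ((ap P g).app X)) : IsCokernelMor g := by
  classical
  set S : ∀ X : C, AddSubgroup ((val P M).obj X) := fun X => ((ap P g).app X).hom.ker with hSdef
  have hS : ∀ ⦃X Y : C⦄ (e : X ⟶ Y) (m : (val P M).obj X), m ∈ S X → (val P M).map e m ∈ S Y := by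
    intro X Y e m hm
    have h1 : (ap P g).app Y ((val P M).map e m) = (val P N).map e ((ap P g).app X m) :=
      nat_apply (ap P g) e m
    have hm0 : (ap P g).app X m = 0 := hm
    rw [AddMonoidHom.mem_ker, h1, hm0]
    exact ((val P N).map e).hom.map_zero
  refine ⟨subObj P rel uh S hS hP, subIncl P rel uh S hS hP, ?_, ?_⟩
  · rw [factorsThroughZero_iff P rel uh hP]
    intro X a
    exact a.2
  · intro W h hfz
    rw [factorsThroughZero_iff P rel uh hP] at hfz
    have hz : ∀ (X : C) (a : (val P M).obj X), (ap P g).app X a = 0 → (ap P h).app X a = 0 := by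
      intro X a ha
      have := hfz X ⟨a, ha⟩
      exact this
    refine ⟨homOf P <| show val P N ⟶ val P W from
      { app := fun X => surjDesc ((ap P g).app X) ((ap P h).app X) (hs X) (hz X)
        naturality := fun X Y e => by
          ext n
          obtain ⟨a, rfl⟩ := hs X n
          show surjDesc _ _ (hs Y) (hz Y) ((val P N).map e ((ap P g).app X a))
            = (val P W).map e (surjDesc _ _ (hs X) (hz X) ((ap P g).app X a))
          rw [surjDesc_apply, ← nat_apply (ap P g) e a, surjDesc_apply, nat_apply (ap P h) e a]
      }, ?_, ?_⟩
    · apply fhom_ext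
      ext X a
      exact surjDesc_apply ((ap P g).app X) ((ap P h).app X) (hs X) (hz X) a
    · intro k hk
      apply fhom_ext
      ext X n
      obtain ⟨a, rfl⟩ := hs X n
      have h1 : (ap P k).app X ((ap P g).app X a) = (ap P h).app X a :=
        congrArg (fun χ : M ⟶ W => (ap P χ).app X a) hk
      rw [h1]
      exact (surjDesc_apply ((ap P g).app X) ((ap P h).app X) (hs X) (hz X) a).symm

theorem surjective_of_isCokernelMor (hP : ∀ M : C ⥤+ AddCommGrpCat.{u}, P M ↔ Good rel uh M.obj)
    {M N : ObjectProperty.FullSubcategory P} (g : M ⟶ N)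
    (hg : IsCokernelMor g) : ∀ X : C, Function.Surjective ((ap P g).app X) := by
  classical
  obtain ⟨Kk, f, hfz, huniv⟩ := hg
  set K : ∀ X : C, AddSubgroup ((val P M).obj X) := fun X =>
    { carrier := {n | ∀ (W : ObjectProperty.FullSubcategory P) (φ : M ⟶ W),
        (∀ (Y : C) (k : (val P Kk).obj Y), (ap P φ).app Y ((ap P f).app Y k) = 0) →
        (ap P φ).app X n = 0}
      zero_mem' := fun W φ _ => ((ap P φ).app X).hom.map_zero
      add_mem' := fun {a b} ha hb W φ hφ => by
        rw [((ap P φ).app X).hom.map_add, ha W φ hφ, hb W φ hφ, add_zero]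
      neg_mem' := fun {a} ha W φ hφ => by
        rw [((ap P φ).app X).hom.map_neg, ha W φ hφ, neg_zero] } with hKdef
  have hK : ∀ ⦃X Y : C⦄ (e : X ⟶ Y) (m : (val P M).obj X), m ∈ K X → (val P M).map e m ∈ K Y := by
    intro X Y e m hm W φ hφ
    rw [nat_apply (ap P φ) e m, hm W φ hφ]
    exact ((val P W).map e).hom.map_zero
  have hcl : ∀ ⦃X Y : C⦄ (h : rel X Y) (m : (val P M).obj X),
      (val P M).map (uh h) m ∈ K Y → m ∈ K X := by
    intro X Y h m hm W φ hφ
    have h1 := hm W φ hφ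
    rw [nat_apply (ap P φ) (uh h) m] at h1
    have h2 : (val P W).map (uh h) ((ap P φ).app X m) = (val P W).map (uh h) 0 := by
      rw [h1, ((val P W).map (uh h)).hom.map_zero]
    exact good_val P rel uh hP W h h2
  -- f lands in K
  have hfK : ∀ (X : C) (k : (val P Kk).obj X), (ap P f).app X k ∈ K X :=
    fun X k W φ hφ => hφ X k
  -- explicit cokernel universal property applied to h := g
  have hfg : ∀ (X : C) (k : (val P Kk).obj X), (ap P (f ≫ g)).app X k = 0 :=
    (factorsThroughZero_iff P rel uh hP (f ≫ g)).mp hfz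
  have hτg : ∀ (X : C) (m : (val P M).obj X), m ∈ K X → (ap P g).app X m = 0 := by
    intro X m hm
    exact hm N g (fun Y k => hfg Y k)
  set k : quotObj P rel uh K hK hP hcl ⟶ N := quotDesc P rel uh K hK hP hcl g hτg with hkdef
  have hπk : quotπ P rel uh K hK hP hcl ≫ k = g := quotπ_quotDesc P rel uh K hK hP hcl g hτg
  -- given universal property applied to h := quotπ
  have hfπ : FactorsThroughZero (f ≫ quotπ P rel uh K hK hP hcl) := by
    rw [factorsThroughZero_iff P rel uh hP]
    intro X kk
    rw [ap_apply_comp, quotπ_apply]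
    exact (QuotientAddGroup.eq_zero_iff _).mpr (hfK X kk)
  obtain ⟨l, hl, hluniq⟩ := huniv (quotπ P rel uh K hK hP hcl) hfπ
  -- k ≫ l = 𝟙
  have hkl : k ≫ l = 𝟙 _ := by
    apply quot_hom_ext
    rw [← Category.assoc, hπk, hl, Category.comp_id]
  -- l ≫ k = 𝟙
  have hlk : l ≫ k = 𝟙 N := by
    obtain ⟨j, hj, hjuniq⟩ := huniv g hfz
    have h1 : g ≫ (l ≫ k) = g := by rw [← Category.assoc, hl, hπk]
    have h2 : l ≫ k = j := hjuniq _ h1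
    have h3 : 𝟙 N = j := hjuniq _ (Category.comp_id g)
    rw [h2, ← h3]
  -- conclude surjectivity
  intro X n
  obtain ⟨m, hm⟩ := quotπ_surjective P rel uh K hK hP hcl X ((ap P l).app X n)
  refine ⟨m, ?_⟩
  have h2 : (ap P k).app X ((ap P (quotπ P rel uh K hK hP hcl)).app X m)
      = (ap P k).app X ((ap P l).app X n) := congrArg _ hm
  rw [← ap_apply_comp, ← ap_apply_comp, hπk, hlk, ap_apply_id] at h2
  exact h2

end Coker

section Pullback

variable {X Y Z : ObjectProperty.FullSubcategory P} (f : X ⟶ Z) (g : Y ⟶ Z)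

def pbSub (α : C) : AddSubgroup ((val P X).obj α × (val P Y).obj α) where
  carrier := {p | (ap P f).app α p.1 = (ap P g).app α p.2}
  zero_mem' := by
    show (ap P f).app α 0 = (ap P g).app α 0
    rw [((ap P f).app α).hom.map_zero, ((ap P g).app α).hom.map_zero]
  add_mem' := by
    intro p q hp hq
    show (ap P f).app α (p.1 + q.1) = (ap P g).app α (p.2 + q.2)
    rw [((ap P f).app α).hom.map_add, ((ap P g).app α).hom.map_add, hp, hq]
  neg_mem' := by
    intro p hp
    show (ap P f).app α (-p.1) = (ap P g).app α (-p.2)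
    rw [((ap P f).app α).hom.map_neg, ((ap P g).app α).hom.map_neg, hp]

lemma pbSub_map {α β : C} (e : α ⟶ β) (p : (val P X).obj α × (val P Y).obj α)
    (hp : p ∈ pbSub P f g α) :
    ((val P X).map e p.1, (val P Y).map e p.2) ∈ pbSub P f g β := by
  show (ap P f).app β ((val P X).map e p.1) = (ap P g).app β ((val P Y).map e p.2)
  rw [nat_apply (ap P f) e, nat_apply (ap P g) e, hp]

/-- the explicit pullback functor -/
def pbF : C ⥤ AddCommGrpCat.{u} where
  obj α := AddCommGrpCat.of (pbSub P f g α)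
  map {α β} e := AddCommGrpCat.ofHom (AddMonoidHom.mk'
    (fun p => ⟨((val P X).map e p.1.1, (val P Y).map e p.1.2), pbSub_map P f g e p.1 p.2⟩)
    (fun p q => by
      refine Subtype.ext (Prod.ext ?_ ?_)
      · exact ((val P X).map e).hom.map_add p.1.1 q.1.1
      · exact ((val P Y).map e).hom.map_add p.1.2 q.1.2))
  map_id α := by
    refine AddCommGrpCat.ext fun p => ?_
    refine Subtype.ext (Prod.ext ?_ ?_) <;>
      simp [CategoryTheory.Functor.map_id] <;> rfl
  map_comp {α β γ} e e' := by
    refine AddCommGrpCat.ext fun p => ?_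
    refine Subtype.ext (Prod.ext ?_ ?_) <;>
      simp [CategoryTheory.Functor.map_comp] <;> rfl

lemma pbF_additive : (pbF P f g).Additive where
  map_add {α β e e'} := by
    ext p
    refine Subtype.ext (Prod.ext ?_ ?_)
    · show (val P X).map (e + e') p.1.1 = _
      rw [X.obj.property.map_add, AddCommGrpCat.hom_add_apply]
      rfl
    · show (val P Y).map (e + e') p.1.2 = _
      rw [Y.obj.property.map_add, AddCommGrpCat.hom_add_apply]
      rfl

lemma pbF_good (hP : ∀ M : C ⥤+ AddCommGrpCat.{u}, P M ↔ Good rel uh M.obj) :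
    Good rel uh (pbF P f g) := by
  intro α β h p q hpq
  have h1 := congrArg (fun r => (r : (val P X).obj β × (val P Y).obj β).1)
    (congrArg Subtype.val hpq)
  have h2 := congrArg (fun r => (r : (val P X).obj β × (val P Y).obj β).2)
    (congrArg Subtype.val hpq)
  refine Subtype.ext (Prod.ext ?_ ?_)
  · exact good_val P rel uh hP X h h1
  · exact good_val P rel uh hP Y h h2

variable (hP : ∀ M : C ⥤+ AddCommGrpCat.{u}, P M ↔ Good rel uh M.obj)

def pbObj : ObjectProperty.FullSubcategory P :=
  pack P rel uh hP (pbF P f g) (pbF_additive P f g) (pbF_good P rel uh f g hP)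

def pbFst : pbObj P rel uh f g hP ⟶ X :=
  homOf P <| show pbF P f g ⟶ val P X from
    { app := fun α => AddCommGrpCat.ofHom (AddMonoidHom.mk' (fun p => p.1.1) (fun p q => rfl))
      naturality := fun α β e => rfl }

def pbSnd : pbObj P rel uh f g hP ⟶ Y :=
  homOf P <| show pbF P f g ⟶ val P Y from
    { app := fun α => AddCommGrpCat.ofHom (AddMonoidHom.mk' (fun p => p.1.2) (fun p q => rfl))
      naturality := fun α β e => rfl }

lemma pb_comm : pbFst P rel uh f g hP ≫ f = pbSnd P rel uh f g hP ≫ g := by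
  apply fhom_ext
  ext α p
  exact p.2

def pbIsLimit : IsLimit (PullbackCone.mk _ _ (pb_comm P rel uh f g hP)) := by
  refine PullbackCone.IsLimit.mk _ (fun s => ?_) (fun s => ?_) (fun s => ?_) (fun s m h1 h2 => ?_)
  · exact homOf P <| show val P s.pt ⟶ pbF P f g from
      { app := fun α => AddCommGrpCat.ofHom (AddMonoidHom.mk'
          (fun w => ⟨((ap P s.fst).app α w, (ap P s.snd).app α w), by
            show (ap P f).app α _ = (ap P g).app α _
            rw [← ap_apply_comp, ← ap_apply_comp, s.condition]⟩)
          (fun w w' => by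
            refine Subtype.ext (Prod.ext ?_ ?_)
            · exact ((ap P s.fst).app α).hom.map_add w w'
            · exact ((ap P s.snd).app α).hom.map_add w w'))
        naturality := fun α β e => by
          ext w
          refine Subtype.ext (Prod.ext ?_ ?_)
          · show ((ap P s.fst).app β) (((val P s.pt).map e) w)
              = ((val P X).map e) (((ap P s.fst).app α) w)
            exact nat_apply (ap P s.fst) e w
          · show ((ap P s.snd).app β) (((val P s.pt).map e) w)
              = ((val P Y).map e) (((ap P s.snd).app α) w)
            exact nat_apply (ap P s.snd) e w }
  · apply fhom_ext; ext α w; rfl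
  · apply fhom_ext; ext α w; rfl
  · apply fhom_ext
    ext α w
    refine Subtype.ext (Prod.ext ?_ ?_)
    · exact congrArg (fun χ : s.pt ⟶ X => (ap P χ).app α w) h1
    · exact congrArg (fun χ : s.pt ⟶ Y => (ap P χ).app α w) h2

theorem isCokernelMor_pullback_fst (hP : ∀ M : C ⥤+ AddCommGrpCat.{u}, P M ↔ Good rel uh M.obj)
    {Pb X Y Z : ObjectProperty.FullSubcategory P} (fst : Pb ⟶ X) (snd : Pb ⟶ Y) (f : X ⟶ Z) (g : Y ⟶ Z)
    (sq : IsPullback fst snd f g) (hg : IsCokernelMor g) : IsCokernelMor fst := by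
  have hsg := surjective_of_isCokernelMor P rel uh hP g hg
  have hlim := pbIsLimit P rel uh f g hP
  set iso := IsLimit.conePointUniqueUpToIso sq.isLimit hlim with hiso
  have hcomp : iso.hom ≫ pbFst P rel uh f g hP = fst := by
    have h1 := IsLimit.conePointUniqueUpToIso_hom_comp sq.isLimit hlim WalkingCospan.left
    simpa [sq.cone_fst] using h1
  apply isCokernelMor_of_surjective P rel uh hP
  intro α x
  obtain ⟨y, hy⟩ := hsg α ((ap P f).app α x)
  have hmem : ((x, y) : (val P X).obj α × (val P Y).obj α) ∈ pbSub P f g α := hy.symm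
  obtain ⟨q, hq⟩ := (iso_bijective P iso α).2 ⟨(x, y), hmem⟩
  refine ⟨q, ?_⟩
  have h2 : (ap P (iso.hom ≫ pbFst P rel uh f g hP)).app α q = (ap P fst).app α q := by
    exact congrArg (fun χ : sq.cone.pt ⟶ X => (ap P χ).app α q) hcomp
  have h3 : (ap P (iso.hom ≫ pbFst P rel uh f g hP)).app α q
      = (ap P (pbFst P rel uh f g hP)).app α ((ap P iso.hom).app α q) := rfl
  rw [← h2]
  show (ap P (pbFst P rel uh f g hP)).app α ((ap P iso.hom).app α q) = x
  rw [hq]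
  rfl

end Pullback

section Kernel

theorem isKernelMor_of_injective_closed (hP : ∀ M : C ⥤+ AddCommGrpCat.{u}, P M ↔ Good rel uh M.obj)
    {Y Q : ObjectProperty.FullSubcategory P} (inl : Y ⟶ Q)
    (hinj : ∀ α : C, Function.Injective ((ap P inl).app α))
    (hcl : ∀ ⦃α β : C⦄ (h : rel α β) (q : (val P Q).obj α),
      (∃ y, (ap P inl).app β y = (val P Q).map (uh h) q) → ∃ y, (ap P inl).app α y = q) :
    IsKernelMor inl := by
  classical
  set K : ∀ α : C, AddSubgroup ((val P Q).obj α) := fun α => ((ap P inl).app α).hom.range with hKdef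
  have hK : ∀ ⦃α β : C⦄ (e : α ⟶ β) (q : (val P Q).obj α), q ∈ K α → (val P Q).map e q ∈ K β := by
    rintro α β e q ⟨y, rfl⟩
    exact ⟨(val P Y).map e y, nat_apply (ap P inl) e y⟩
  have hcl' : ∀ ⦃α β : C⦄ (h : rel α β) (q : (val P Q).obj α),
      (val P Q).map (uh h) q ∈ K β → q ∈ K α := by
    intro α β h q hq
    obtain ⟨y, hy⟩ := hq
    obtain ⟨y', hy'⟩ := hcl h q ⟨y, hy⟩
    exact ⟨y', hy'⟩
  refine ⟨quotObj P rel uh K hK hP hcl', quotπ P rel uh K hK hP hcl', ?_, ?_⟩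
  · rw [factorsThroughZero_iff P rel uh hP]
    intro α y
    rw [ap_apply_comp, quotπ_eq_zero_iff]
    exact ⟨y, rfl⟩
  · intro W h hz
    rw [factorsThroughZero_iff P rel uh hP] at hz
    have hr : ∀ (α : C) (w : (val P W).obj α), ∃ y, (ap P inl).app α y = (ap P h).app α w := by
      intro α w
      have := hz α w
      rw [ap_apply_comp, quotπ_eq_zero_iff] at this
      exact this
    refine ⟨homOf P <| show val P W ⟶ val P Y from
      { app := fun α => injDesc ((ap P inl).app α) (hinj α) ((ap P h).app α) (hr α)
        naturality := fun α β e => by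
          ext w
          apply hinj β
          show (ap P inl).app β (injDesc _ (hinj β) _ (hr β) ((val P W).map e w))
            = (ap P inl).app β ((val P Y).map e (injDesc _ (hinj α) _ (hr α) w))
          rw [injDesc_spec, nat_apply (ap P inl) e, injDesc_spec, nat_apply (ap P h) e] }, ?_, ?_⟩
    · apply fhom_ext
      ext α w
      exact injDesc_spec ((ap P inl).app α) (hinj α) ((ap P h).app α) (hr α) w
    · intro k hk
      apply fhom_ext
      ext α w
      apply hinj α
      have h1 : (ap P inl).app α ((ap P k).app α w) = (ap P h).app α w :=
        congrArg (fun χ : W ⟶ Q => (ap P χ).app α w) hk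
      rw [h1]
      exact (injDesc_spec ((ap P inl).app α) (hinj α) ((ap P h).app α) (hr α) w).symm

theorem injective_closed_of_isKernelMor
    (hP : ∀ M : C ⥤+ AddCommGrpCat.{u}, P M ↔ Good rel uh M.obj)
    {Xo Z : ObjectProperty.FullSubcategory P} (g : Xo ⟶ Z) (hg : IsKernelMor g) :
    (∀ α : C, Function.Injective ((ap P g).app α)) ∧
    (∀ ⦃α β : C⦄ (h : rel α β) (z : (val P Z).obj α),
      (∃ x, (ap P g).app β x = (val P Z).map (uh h) z) → ∃ x, (ap P g).app α x = z) := by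
  classical
  obtain ⟨W, w, hwz, huniv⟩ := hg
  rw [factorsThroughZero_iff P rel uh hP] at hwz
  set S : ∀ α : C, AddSubgroup ((val P Z).obj α) := fun α => ((ap P w).app α).hom.ker with hSdef
  have hS : ∀ ⦃α β : C⦄ (e : α ⟶ β) (z : (val P Z).obj α), z ∈ S α → (val P Z).map e z ∈ S β := by
    intro α β e z hz
    have hz0 : (ap P w).app α z = 0 := hz
    have : (ap P w).app β ((val P Z).map e z) = (val P W).map e ((ap P w).app α z) :=
      nat_apply (ap P w) e z
    rw [AddMonoidHom.mem_ker, this, hz0]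
    exact ((val P W).map e).hom.map_zero
  set ι := subIncl P rel uh S hS hP with hιdef
  -- l : Xo ⟶ ker with l ≫ ι = g
  set l : Xo ⟶ subObj P rel uh S hS hP :=
    homOf P <| show val P Xo ⟶ subF P S hS from
      { app := fun α => AddCommGrpCat.ofHom (AddMonoidHom.mk'
          (fun x => ⟨(ap P g).app α x, hwz α x⟩)
          (fun x x' => Subtype.ext (((ap P g).app α).hom.map_add x x')))
        naturality := fun α β e => by
          ext x
          refine Subtype.ext ?_
          show (ap P g).app β ((val P Xo).map e x) = (val P Z).map e ((ap P g).app α x)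
          exact nat_apply (ap P g) e x } with hldef
  have hlι : l ≫ ι = g := rfl
  -- k : ker ⟶ Xo with k ≫ g = ι
  have hιz : FactorsThroughZero (ι ≫ w) := by
    rw [factorsThroughZero_iff P rel uh hP]
    intro α a
    exact a.2
  obtain ⟨k, hk, hkuniq⟩ := huniv ι hιz
  -- l ≫ k = 𝟙
  have hgz : FactorsThroughZero (g ≫ w) := by
    rw [factorsThroughZero_iff P rel uh hP]
    exact hwz
  have hlk : l ≫ k = 𝟙 Xo := by
    obtain ⟨j, hj, hjuniq⟩ := huniv g hgz
    have h1 : (l ≫ k) ≫ g = g := by rw [Category.assoc, hk, hlι]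
    have h2 : l ≫ k = j := hjuniq _ h1
    have h3 : 𝟙 Xo = j := hjuniq _ (Category.id_comp g)
    rw [h2, ← h3]
  constructor
  · intro α x x' hxx
    have h1 : (ap P l).app α x = (ap P l).app α x' := by
      apply subIncl_injective P rel uh S hS hP α
      have e1 : (ap P ι).app α ((ap P l).app α x) = (ap P g).app α x :=
        congrArg (fun χ : Xo ⟶ Z => (ap P χ).app α x) hlι
      have e2 : (ap P ι).app α ((ap P l).app α x') = (ap P g).app α x' :=
        congrArg (fun χ : Xo ⟶ Z => (ap P χ).app α x') hlι
      rw [e1, e2, hxx]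
    have h2 : (ap P k).app α ((ap P l).app α x) = (ap P k).app α ((ap P l).app α x') :=
      congrArg _ h1
    have h3 := congrArg (fun χ : Xo ⟶ Xo => (ap P χ).app α x) hlk
    have h4 := congrArg (fun χ : Xo ⟶ Xo => (ap P χ).app α x') hlk
    have h5 : (ap P k).app α ((ap P l).app α x) = x := h3
    have h6 : (ap P k).app α ((ap P l).app α x') = x' := h4
    rw [h5, h6] at h2
    exact h2
  · intro α β h z hz
    obtain ⟨x, hx⟩ := hz
    -- w z = 0
    have h1 : (ap P w).app β ((val P Z).map (uh h) z) = 0 := by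
      rw [← hx]
      exact hwz β x
    have h2 : (val P W).map (uh h) ((ap P w).app α z) = 0 := by
      rw [← nat_apply (ap P w) (uh h) z]
      exact h1
    have h3 : (ap P w).app α z = 0 := by
      apply good_val P rel uh hP W h
      rw [h2, ((val P W).map (uh h)).hom.map_zero]
    refine ⟨(ap P k).app α ⟨z, h3⟩, ?_⟩
    have h4 : (ap P g).app α ((ap P k).app α ⟨z, h3⟩)
        = (ap P ι).app α ⟨z, h3⟩ :=
      congrArg (fun χ : subObj P rel uh S hS hP ⟶ Z => (ap P χ).app α ⟨z, h3⟩) hk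
    rw [h4]
    rfl

end Kernel

section Pushout

variable {X Y Z : ObjectProperty.FullSubcategory P} (f : X ⟶ Y) (g : X ⟶ Z)

/-- the antidiagonal image subgroup -/
def poW (α : C) : AddSubgroup ((val P Y).obj α × (val P Z).obj α) :=
  (((ap P f).app α).hom.prod (-((ap P g).app α).hom)).range

lemma mem_poW {α : C} (p : (val P Y).obj α × (val P Z).obj α) :
    p ∈ poW P f g α ↔ ∃ x, (ap P f).app α x = p.1 ∧ -((ap P g).app α x) = p.2 := by
  constructor
  · rintro ⟨x, rfl⟩
    exact ⟨x, rfl, rfl⟩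
  · rintro ⟨x, h1, h2⟩
    refine ⟨x, ?_⟩
    have : (((ap P f).app α).hom.prod (-((ap P g).app α).hom)) x
        = ((ap P f).app α x, -((ap P g).app α x)) := rfl
    rw [this, h1, h2]

lemma poW_map {α β : C} (e : α ⟶ β) (p : (val P Y).obj α × (val P Z).obj α)
    (hp : p ∈ poW P f g α) :
    ((val P Y).map e p.1, (val P Z).map e p.2) ∈ poW P f g β := by
  rw [mem_poW] at hp ⊢
  obtain ⟨x, h1, h2⟩ := hp
  refine ⟨(val P X).map e x, ?_, ?_⟩
  · show (ap P f).app β ((val P X).map e x) = (val P Y).map e p.1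
    rw [← h1]
    exact nat_apply (ap P f) e x
  · show -((ap P g).app β ((val P X).map e x)) = (val P Z).map e p.2
    rw [← h2, ((val P Z).map e).hom.map_neg, neg_inj]
    exact nat_apply (ap P g) e x

/-- the explicit pushout functor -/
def poF : C ⥤ AddCommGrpCat.{u} where
  obj α := AddCommGrpCat.of (((val P Y).obj α × (val P Z).obj α) ⧸ poW P f g α)
  map {α β} e := AddCommGrpCat.ofHom (QuotientAddGroup.map _ _
    (((val P Y).map e).hom.prodMap ((val P Z).map e).hom) (fun p hp => poW_map P f g e p hp))
  map_id α := by
    refine AddCommGrpCat.ext fun x => ?_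
    induction x using QuotientAddGroup.induction_on with
    | H p =>
      show QuotientAddGroup.mk ((val P Y).map (𝟙 α) p.1, (val P Z).map (𝟙 α) p.2) = _
      rw [CategoryTheory.Functor.map_id, CategoryTheory.Functor.map_id]
      rfl
  map_comp {α β γ} e e' := by
    refine AddCommGrpCat.ext fun x => ?_
    induction x using QuotientAddGroup.induction_on with
    | H p =>
      show QuotientAddGroup.mk ((val P Y).map (e ≫ e') p.1, (val P Z).map (e ≫ e') p.2) = _
      rw [CategoryTheory.Functor.map_comp, CategoryTheory.Functor.map_comp]
      rfl

lemma poF_map_mk {α β : C} (e : α ⟶ β) (p : (val P Y).obj α × (val P Z).obj α) :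
    (poF P f g).map e (QuotientAddGroup.mk p)
      = QuotientAddGroup.mk ((val P Y).map e p.1, (val P Z).map e p.2) := rfl

lemma poF_additive : (poF P f g).Additive where
  map_add {α β e e'} := by
    ext x
    induction x using QuotientAddGroup.induction_on with
    | H p =>
      have hr : ((poF P f g).map e + (poF P f g).map e') (QuotientAddGroup.mk p)
          = (QuotientAddGroup.mk ((val P Y).map e p.1 + (val P Y).map e' p.1,
              (val P Z).map e p.2 + (val P Z).map e' p.2) :
              ((val P Y).obj β × (val P Z).obj β) ⧸ poW P f g β) := rfl
      rw [hr, poF_map_mk, Y.obj.property.map_add, Z.obj.property.map_add,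
        AddCommGrpCat.hom_add_apply, AddCommGrpCat.hom_add_apply]

lemma poW_reduce (hinj : ∀ α : C, Function.Injective ((ap P g).app α))
    (hcl : ∀ ⦃α β : C⦄ (h : rel α β) (z : (val P Z).obj α),
      (∃ x, (ap P g).app β x = (val P Z).map (uh h) z) → ∃ x, (ap P g).app α x = z)
    (hP : ∀ M : C ⥤+ AddCommGrpCat.{u}, P M ↔ Good rel uh M.obj)
    {α β : C} (h : rel α β) (p : (val P Y).obj α × (val P Z).obj α)
    (hp : ((val P Y).map (uh h) p.1, (val P Z).map (uh h) p.2) ∈ poW P f g β) :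
    p ∈ poW P f g α := by
  rw [mem_poW] at hp
  obtain ⟨xb, h1, h2⟩ := hp
  have h1' : (ap P f).app β xb = (val P Y).map (uh h) p.1 := h1
  have h2' : -((ap P g).app β xb) = (val P Z).map (uh h) p.2 := h2
  obtain ⟨x0, hx0⟩ : ∃ x0, (ap P g).app α x0 = -p.2 := by
    apply hcl h
    refine ⟨xb, ?_⟩
    rw [((val P Z).map (uh h)).hom.map_neg, ← h2', neg_neg]
  have hxb' : (val P X).map (uh h) x0 = xb := by
    apply hinj β
    calc (ap P g).app β ((val P X).map (uh h) x0)
        = (val P Z).map (uh h) ((ap P g).app α x0) := nat_apply (ap P g) (uh h) x0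
      _ = (val P Z).map (uh h) (-p.2) := by rw [hx0]
      _ = -((val P Z).map (uh h) p.2) := ((val P Z).map (uh h)).hom.map_neg p.2
      _ = (ap P g).app β xb := by rw [← h2', neg_neg]
  have hp1 : (ap P f).app α x0 = p.1 := by
    apply good_val P rel uh hP Y h
    have hn := nat_apply (ap P f) (uh h) x0
    rw [← hn, hxb']
    exact h1'
  rw [mem_poW]
  refine ⟨x0, hp1, ?_⟩
  rw [hx0, neg_neg]

lemma poF_good (hinj : ∀ α : C, Function.Injective ((ap P g).app α))
    (hcl : ∀ ⦃α β : C⦄ (h : rel α β) (z : (val P Z).obj α),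
      (∃ x, (ap P g).app β x = (val P Z).map (uh h) z) → ∃ x, (ap P g).app α x = z)
    (hP : ∀ M : C ⥤+ AddCommGrpCat.{u}, P M ↔ Good rel uh M.obj) :
    Good rel uh (poF P f g) := by
  intro α β h
  rw [injective_iff_map_eq_zero]
  intro x
  induction x using QuotientAddGroup.induction_on with
  | H p =>
    intro hp
    rw [poF_map_mk] at hp
    have hmem := (QuotientAddGroup.eq_zero_iff _).mp hp
    exact (QuotientAddGroup.eq_zero_iff _).mpr (poW_reduce P rel uh f g hinj hcl hP h p hmem)

variable (hinj : ∀ α : C, Function.Injective ((ap P g).app α))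
variable (hcl : ∀ ⦃α β : C⦄ (h : rel α β) (z : (val P Z).obj α),
      (∃ x, (ap P g).app β x = (val P Z).map (uh h) z) → ∃ x, (ap P g).app α x = z)
variable (hP : ∀ M : C ⥤+ AddCommGrpCat.{u}, P M ↔ Good rel uh M.obj)

def poObj : ObjectProperty.FullSubcategory P :=
  pack P rel uh hP (poF P f g) (poF_additive P f g)
    (poF_good P rel uh f g hinj hcl hP)

def poInl : Y ⟶ poObj P rel uh f g hinj hcl hP :=
  homOf P <| show val P Y ⟶ poF P f g from
    { app := fun α => AddCommGrpCat.ofHom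
        ((QuotientAddGroup.mk' (poW P f g α)).comp (AddMonoidHom.inl _ _))
      naturality := fun α β e => by
        ext y
        show (QuotientAddGroup.mk ((val P Y).map e y, (0 : (val P Z).obj β)) :
            ((val P Y).obj β × (val P Z).obj β) ⧸ poW P f g β)
          = QuotientAddGroup.mk ((val P Y).map e y, (val P Z).map e 0)
        rw [((val P Z).map e).hom.map_zero] }

def poInr : Z ⟶ poObj P rel uh f g hinj hcl hP :=
  homOf P <| show val P Z ⟶ poF P f g from
    { app := fun α => AddCommGrpCat.ofHom
        ((QuotientAddGroup.mk' (poW P f g α)).comp (AddMonoidHom.inr _ _))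
      naturality := fun α β e => by
        ext z
        show (QuotientAddGroup.mk ((0 : (val P Y).obj β), (val P Z).map e z) :
            ((val P Y).obj β × (val P Z).obj β) ⧸ poW P f g β)
          = QuotientAddGroup.mk ((val P Y).map e 0, (val P Z).map e z)
        rw [((val P Y).map e).hom.map_zero] }

lemma poInl_apply (α : C) (y : (val P Y).obj α) :
    (ap P (poInl P rel uh f g hinj hcl hP)).app α y = QuotientAddGroup.mk (y, 0) := rfl

lemma poInr_apply (α : C) (z : (val P Z).obj α) :
    (ap P (poInr P rel uh f g hinj hcl hP)).app α z = QuotientAddGroup.mk (0, z) := rfl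

lemma po_comm :
    f ≫ poInl P rel uh f g hinj hcl hP = g ≫ poInr P rel uh f g hinj hcl hP := by
  apply fhom_ext
  ext α x
  show (QuotientAddGroup.mk ((ap P f).app α x, 0) :
      ((val P Y).obj α × (val P Z).obj α) ⧸ poW P f g α)
    = QuotientAddGroup.mk (0, (ap P g).app α x)
  rw [QuotientAddGroup.eq_iff_sub_mem, mem_poW]
  exact ⟨x, by simp, by simp⟩

lemma poInl_injective (α : C) :
    Function.Injective ((ap P (poInl P rel uh f g hinj hcl hP)).app α) := by
  rw [injective_iff_map_eq_zero]
  intro y hy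
  rw [poInl_apply] at hy
  have := (QuotientAddGroup.eq_zero_iff _).mp hy
  rw [mem_poW] at this
  obtain ⟨x, h1, h2⟩ := this
  have hx0 : x = 0 := by
    apply hinj α
    rw [((ap P g).app α).hom.map_zero]
    have := congrArg Neg.neg h2
    rw [neg_neg, neg_zero] at this
    exact this
  have h1' : (ap P f).app α x = y := h1
  rw [← h1', hx0, ((ap P f).app α).hom.map_zero]

lemma poInl_range_closed {α β : C} (h : rel α β)
    (q : (val P (poObj P rel uh f g hinj hcl hP)).obj α)
    (hq : ∃ y, (ap P (poInl P rel uh f g hinj hcl hP)).app β y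
      = (val P (poObj P rel uh f g hinj hcl hP)).map (uh h) q) :
    ∃ y, (ap P (poInl P rel uh f g hinj hcl hP)).app α y = q := by
  obtain ⟨y', hy'⟩ := hq
  induction q using QuotientAddGroup.induction_on with
  | H p =>
    rw [poInl_apply] at hy'
    have hy'' : ((y' : (val P Y).obj β), (0 : (val P Z).obj β))
        - ((val P Y).map (uh h) p.1, (val P Z).map (uh h) p.2) ∈ poW P f g β := by
      rw [← QuotientAddGroup.eq_iff_sub_mem]
      rw [hy']
      rfl
    rw [mem_poW] at hy''
    obtain ⟨xb, h1, h2⟩ := hy''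
    -- (val P Z).map (uh h) p.2 = g xb
    have hz : (ap P g).app β xb = (val P Z).map (uh h) p.2 := by
      have h2' : -((ap P g).app β xb) = 0 - (val P Z).map (uh h) p.2 := h2
      rw [zero_sub] at h2'
      rw [← neg_neg ((ap P g).app β xb), h2', neg_neg]
    obtain ⟨x0, hx0⟩ := hcl h p.2 ⟨xb, hz⟩
    refine ⟨p.1 + (ap P f).app α x0, ?_⟩
    rw [poInl_apply]
    refine QuotientAddGroup.eq_iff_sub_mem.mpr ?_
    rw [mem_poW]
    refine ⟨x0, ?_, ?_⟩
    · show (ap P f).app α x0 = (p.1 + (ap P f).app α x0) - p.1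
      abel
    · show -((ap P g).app α x0) = 0 - p.2
      rw [hx0, zero_sub]

def poDesc (s : PushoutCocone f g) : poObj P rel uh f g hinj hcl hP ⟶ s.pt :=
  homOf P <| show poF P f g ⟶ val P s.pt from
    { app := fun α => AddCommGrpCat.ofHom (QuotientAddGroup.lift (poW P f g α)
        (((ap P s.inl).app α).hom.coprod ((ap P s.inr).app α).hom) (by
          rintro p ⟨x, rfl⟩
          show (ap P s.inl).app α ((ap P f).app α x)
            + (ap P s.inr).app α (-((ap P g).app α x)) = 0
          rw [((ap P s.inr).app α).hom.map_neg]
          have hc : (ap P s.inl).app α ((ap P f).app α x)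
              = (ap P s.inr).app α ((ap P g).app α x) :=
            congrArg (fun χ : X ⟶ s.pt => (ap P χ).app α x) s.condition
          rw [hc, add_neg_cancel]))
      naturality := fun α β e => by
        ext q
        induction q using QuotientAddGroup.induction_on with
        | H p =>
          show (ap P s.inl).app β ((val P Y).map e p.1)
              + (ap P s.inr).app β ((val P Z).map e p.2)
            = (val P s.pt).map e ((ap P s.inl).app α p.1 + (ap P s.inr).app α p.2)
          rw [((val P s.pt).map e).hom.map_add, nat_apply (ap P s.inl) e,
            nat_apply (ap P s.inr) e] }

lemma poDesc_mk (s : PushoutCocone f g) (α : C)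
    (p : (val P Y).obj α × (val P Z).obj α) :
    (ap P (poDesc P rel uh f g hinj hcl hP s)).app α (QuotientAddGroup.mk p)
      = (ap P s.inl).app α p.1 + (ap P s.inr).app α p.2 := rfl

def poIsColimit : IsColimit (PushoutCocone.mk _ _ (po_comm P rel uh f g hinj hcl hP)) := by
  refine PushoutCocone.IsColimit.mk _ (fun s => poDesc P rel uh f g hinj hcl hP s)
    (fun s => ?_) (fun s => ?_) (fun s m h1 h2 => ?_)
  · apply fhom_ext
    ext α y
    show (ap P s.inl).app α y + (ap P s.inr).app α 0 = (ap P s.inl).app α y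
    rw [((ap P s.inr).app α).hom.map_zero, add_zero]
  · apply fhom_ext
    ext α z
    show (ap P s.inl).app α 0 + (ap P s.inr).app α z = (ap P s.inr).app α z
    rw [((ap P s.inl).app α).hom.map_zero, zero_add]
  · apply fhom_ext
    ext α q
    induction q using QuotientAddGroup.induction_on with
    | H p =>
      have hsum : ((p.1, 0) : (val P Y).obj α × (val P Z).obj α) + (0, p.2) = p :=
        Prod.ext (add_zero p.1) (zero_add p.2)
      have hsplit : (QuotientAddGroup.mk p :
          ((val P Y).obj α × (val P Z).obj α) ⧸ poW P f g α)
        = QuotientAddGroup.mk (p.1, 0) + QuotientAddGroup.mk (0, p.2) :=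
        (congrArg QuotientAddGroup.mk hsum.symm).trans rfl
      have e1 : (ap P m).app α (QuotientAddGroup.mk (p.1, 0)) = (ap P s.inl).app α p.1 :=
        congrArg (fun χ : Y ⟶ s.pt => (ap P χ).app α p.1) h1
      have e2 : (ap P m).app α (QuotientAddGroup.mk (0, p.2)) = (ap P s.inr).app α p.2 :=
        congrArg (fun χ : Z ⟶ s.pt => (ap P χ).app α p.2) h2
      refine (congrArg ((ap P m).app α) hsplit).trans
        (((((ap P m).app α).hom.map_add _ _).trans (congrArg₂ (· + ·) e1 e2)).trans ?_)
      exact (poDesc_mk P rel uh f g hinj hcl hP s α p).symm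

theorem isKernelMor_pushout_inl (hP : ∀ M : C ⥤+ AddCommGrpCat.{u}, P M ↔ Good rel uh M.obj)
    {X Y Z Po : ObjectProperty.FullSubcategory P} (f : X ⟶ Y) (g : X ⟶ Z) (inl : Y ⟶ Po) (inr : Z ⟶ Po)
    (sq : IsPushout f g inl inr) (hg : IsKernelMor g) : IsKernelMor inl := by
  obtain ⟨hinj, hcl⟩ := injective_closed_of_isKernelMor P rel uh hP g hg
  have hcolim := poIsColimit P rel uh f g hinj hcl hP
  set iso := IsColimit.coconePointUniqueUpToIso sq.isColimit hcolim with hiso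
  have hcomp : inl ≫ iso.hom = poInl P rel uh f g hinj hcl hP := by
    have h1 := IsColimit.comp_coconePointUniqueUpToIso_hom sq.isColimit hcolim
      WalkingSpan.left
    simp [sq.cocone_inl] at h1
    exact h1
  apply isKernelMor_of_injective_closed P rel uh hP
  · intro α a b hab
    have e1 : ∀ y : (val P Y).obj α, (ap P (poInl P rel uh f g hinj hcl hP)).app α y
        = (ap P iso.hom).app α ((ap P inl).app α y) := by
      intro y
      exact (congrArg (fun χ : Y ⟶ poObj P rel uh f g hinj hcl hP =>
        (ap P χ).app α y) hcomp).symm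
    apply poInl_injective P rel uh f g hinj hcl hP α
    rw [e1 a, e1 b, hab]
  · intro α β h q hq
    obtain ⟨y, hy⟩ := hq
    have e1 : (ap P (poInl P rel uh f g hinj hcl hP)).app β y
        = (ap P iso.hom).app β ((ap P inl).app β y) :=
      (congrArg (fun χ : Y ⟶ poObj P rel uh f g hinj hcl hP =>
        (ap P χ).app β y) hcomp).symm
    have e2 : (ap P (poInl P rel uh f g hinj hcl hP)).app β y
        = (val P (poObj P rel uh f g hinj hcl hP)).map (uh h) ((ap P iso.hom).app α q) := by
      rw [e1, hy]
      exact nat_apply (ap P iso.hom) (uh h) q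
    obtain ⟨y', hy'⟩ := poInl_range_closed P rel uh f g hinj hcl hP h
      ((ap P iso.hom).app α q) ⟨y, e2⟩
    refine ⟨y', ?_⟩
    apply (iso_bijective P iso α).1
    have e3 : (ap P (poInl P rel uh f g hinj hcl hP)).app α y'
        = (ap P iso.hom).app α ((ap P inl).app α y') :=
      (congrArg (fun χ : Y ⟶ poObj P rel uh f g hinj hcl hP =>
        (ap P χ).app α y') hcomp).symm
    rw [← e3, hy']

end Pushout

end General


section Instantiation

variable {Γ : Type u} [Group Γ] [PartialOrder Γ]
  [CovariantClass Γ Γ (· * ·) (· ≤ ·)] [CovariantClass Γ Γ (Function.swap (· * ·)) (· ≤ ·)]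
  {R : Type u} [Ring R]

variable (FR : RingFiltration Γ R) (Λ : Set Γ)

/-- the relation on `FF` -/
def relFF : FF FR Λ → FF FR Λ → Prop
  | .of a, .of b => (a : Γ) ≤ (b : Γ)

/-- the distinguished morphisms of `FF` -/
def uhFF : ∀ ⦃X Y : FF FR Λ⦄, relFF FR Λ X Y → (X ⟶ Y)
  | .of a, .of b, h => unitHomFF FR Λ a b h

lemma hP_preglid (M : Mod (OFF FR Λ)) :
    IsPreglider FR Λ M ↔ Good (OFF.le FR Λ) (fun X Y h => unitHom FR Λ X Y h) M.obj :=
  Iff.rfl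

lemma hP_prefrag (M : Mod (FF FR Λ)) :
    IsPrefragment FR Λ M ↔ Good (relFF FR Λ) (uhFF FR Λ) M.obj := by
  constructor
  · rintro hM ⟨a⟩ ⟨b⟩ h
    exact hM a b h
  · intro hM a b h
    exact hM (X := .of a) (Y := .of b) h

end Instantiation

section Statements

variable {Γ : Type u} [Group Γ] [PartialOrder Γ]
  [CovariantClass Γ Γ (· * ·) (· ≤ ·)] [CovariantClass Γ Γ (Function.swap (· * ·)) (· ≤ ·)]
  {R : Type u} [Ring R]

/-- The categories `Preglid FR` and `Prefrag FR` are complete and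
cocomplete quasi-abelian categories: each is additive (they carry `Preadditive`
instances, constructed above, and have all limits and colimits, in particular kernels,
cokernels and biproducts), cokernels are stable under pullback and kernels are stable
under pushout. -/
theorem statement_9 (FR : RingFiltration Γ R) (Λ : Set Γ) :
    -- `Preglid FR` is a complete and cocomplete quasi-abelian category
    (HasLimits (Preglid FR Λ) ∧ HasColimits (Preglid FR Λ) ∧
     (∀ {P X Y Z : Preglid FR Λ} (fst : P ⟶ X) (snd : P ⟶ Y) (f : X ⟶ Z) (g : Y ⟶ Z),
        IsPullback fst snd f g → IsCokernelMor g → IsCokernelMor fst) ∧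
     (∀ {X Y Z P : Preglid FR Λ} (f : X ⟶ Y) (g : X ⟶ Z) (inl : Y ⟶ P) (inr : Z ⟶ P),
        IsPushout f g inl inr → IsKernelMor g → IsKernelMor inl)) ∧
    -- `Prefrag FR` is a complete and cocomplete quasi-abelian category
    (HasLimits (Prefrag FR Λ) ∧ HasColimits (Prefrag FR Λ) ∧
     (∀ {P X Y Z : Prefrag FR Λ} (fst : P ⟶ X) (snd : P ⟶ Y) (f : X ⟶ Z) (g : Y ⟶ Z),
        IsPullback fst snd f g → IsCokernelMor g → IsCokernelMor fst) ∧
     (∀ {X Y Z P : Prefrag FR Λ} (f : X ⟶ Y) (g : X ⟶ Z) (inl : Y ⟶ P) (inr : Z ⟶ P),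
        IsPushout f g inl inr → IsKernelMor g → IsKernelMor inl)) := by
  constructor
  · refine ⟨?_, ?_, ?_, ?_⟩
    · exact frg_hasLimits _ (OFF.le FR Λ) (fun X Y h => unitHom FR Λ X Y h)
        (hP_preglid FR Λ)
    · exact frg_hasColimits _ (OFF.le FR Λ) (fun X Y h => unitHom FR Λ X Y h)
        (hP_preglid FR Λ)
    · intro P X Y Z fst snd f g sq hg
      exact isCokernelMor_pullback_fst _ (OFF.le FR Λ) (fun X Y h => unitHom FR Λ X Y h)
        (hP_preglid FR Λ) fst snd f g sq hg
    · intro X Y Z P f g inl inr sq hg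
      exact isKernelMor_pushout_inl _ (OFF.le FR Λ) (fun X Y h => unitHom FR Λ X Y h)
        (hP_preglid FR Λ) f g inl inr sq hg
  · refine ⟨?_, ?_, ?_, ?_⟩
    · exact frg_hasLimits _ (relFF FR Λ) (uhFF FR Λ) (hP_prefrag FR Λ)
    · exact frg_hasColimits _ (relFF FR Λ) (uhFF FR Λ) (hP_prefrag FR Λ)
    · intro P X Y Z fst snd f g sq hg
      exact isCokernelMor_pullback_fst _ (relFF FR Λ) (uhFF FR Λ)
        (hP_prefrag FR Λ) fst snd f g sq hg
    · intro X Y Z P f g inl inr sq hg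
      exact isKernelMor_pushout_inl _ (relFF FR Λ) (uhFF FR Λ)
        (hP_prefrag FR Λ) f g inl inr sq hg


end Statements

end GliderPaper
end
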